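/- Fix i ∈ {1,…,n} with λ̃_i = 0. Then for every x ∈ ℝ the function τ ↦ λ_i(w̃(τ, Z^0(x))) − λ_i(w̄) belongs to L^1((0,∞)), and ∫_0^t (u(w̃(τ, Z^0(x))) − u(w̄)) dτ → ∫_0^{+∞} (λ_i(w̃(τ, Z^0(x))) − λ_i(w̄)) dτ as t → +∞, pointwise in x on ℝ and uniformly for x in every compact subset of ℝ. -/

import Mathlib

open MeasureTheory Filter Set

open scoped NNReal ENNReal

/-- Pushing forward by a map whose inverse is Lipschitz multiplies lintegrals by at most
the Lipschitz constant. -/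
lemma aux_comp_lintegral_le {ψ φ : ℝ → ℝ} (hψ : Measurable ψ) {L : ℝ≥0}
    (hφ : LipschitzWith L φ) (h1 : ∀ σ, ψ (φ σ) = σ) (h2 : ∀ τ, φ (ψ τ) = τ)
    {g : ℝ → ℝ≥0∞} (hg : Measurable g) :
    ∫⁻ τ, g (ψ τ) ≤ (L : ℝ≥0∞) * ∫⁻ σ, g σ := by
  have hmap : Measure.map ψ volume ≤ (L : ℝ≥0∞) • volume := by
    refine Measure.le_iff.2 fun A hA => ?_
    rw [Measure.map_apply hψ hA]
    have hpre : ψ ⁻¹' A = φ '' A := by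
      ext τ
      constructor
      · intro h; exact ⟨ψ τ, h, h2 τ⟩
      · rintro ⟨σ, hσ, rfl⟩
        simpa [Set.mem_preimage, h1 σ] using hσ
    rw [hpre]
    have hH : (volume : Measure ℝ) = μH[1] := (MeasureTheory.hausdorffMeasure_real).symm
    calc (volume : Measure ℝ) (φ '' A) = μH[1] (φ '' A) := by rw [hH]
      _ ≤ (L : ℝ≥0∞) ^ (1 : ℝ) * μH[1] A := hφ.hausdorffMeasure_image_le zero_le_one A
      _ = (L : ℝ≥0∞) * volume A := by rw [ENNReal.rpow_one, hH]
      _ = ((L : ℝ≥0∞) • volume) A := by simp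
  calc ∫⁻ τ, g (ψ τ) = ∫⁻ σ, g σ ∂(Measure.map ψ volume) := (lintegral_map hg hψ).symm
    _ ≤ ∫⁻ σ, g σ ∂((L : ℝ≥0∞) • volume) := lintegral_mono' hmap le_rfl
    _ = (L : ℝ≥0∞) * ∫⁻ σ, g σ := lintegral_smul_measure _ _

lemma aux_tendsto_measure_Iio_atBot (ν : Measure ℝ) (hν : ν univ ≠ ∞) :
    Tendsto (fun m => ν (Iio m)) atBot (nhds 0) := by
  have h := tendsto_measure_iInter_atBot (μ := ν) (s := fun m : ℝ => Iio m)
    (fun m => measurableSet_Iio.nullMeasurableSet)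
    (fun a b hab => Iio_subset_Iio hab)
    ⟨0, fun h => hν (top_unique (h ▸ measure_mono (subset_univ _)))⟩
  have hempty : ⋂ m : ℝ, Iio m = (∅ : Set ℝ) := by
    ext y
    simp only [mem_iInter, mem_Iio, mem_empty_iff_false, iff_false, not_forall, not_lt]
    exact ⟨y, le_refl y⟩
  rw [hempty, measure_empty] at h
  exact h

lemma aux_tendsto_measure_Ioi_atTop (ν : Measure ℝ) (hν : ν univ ≠ ∞) :
    Tendsto (fun m => ν (Ioi m)) atTop (nhds 0) := by
  have h := tendsto_measure_iInter_atTop (μ := ν) (s := fun m : ℝ => Ioi m)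
    (fun m => measurableSet_Ioi.nullMeasurableSet)
    (fun a b hab => Ioi_subset_Ioi hab)
    ⟨0, fun h => hν (top_unique (h ▸ measure_mono (subset_univ _)))⟩
  have hempty : ⋂ m : ℝ, Ioi m = (∅ : Set ℝ) := by
    ext y
    simp only [mem_iInter, mem_Ioi, mem_empty_iff_false, iff_false, not_forall, not_lt]
    exact ⟨y, le_refl y⟩
  rw [hempty, measure_empty] at h
  exact h

theorem stmt_2
    (n : ℕ) (hn : 2 ≤ n)
    (K : Set (Fin n → ℝ)) (hK : IsCompact K)
    (lam : Fin n → (Fin n → ℝ) → ℝ) (hlam : ∀ i, ContDiff ℝ 1 (lam i))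
    (N : (Fin n → ℝ) → ℝ) (hN : ContDiff ℝ 1 N)
    (c C : ℝ) (hc : 0 < c) (hcC : c ≤ C)
    (hNbd : ∀ w ∈ convexHull ℝ K, c ≤ N w ∧ N w ≤ C)
    (M : (Fin n → ℝ) → ℝ) (tlam : Fin n → ℝ)
    (hrich : ∀ (w : Fin n → ℝ) (i : Fin n), N w * lam i w - tlam i = M w)
    (hstrict : ∀ w : Fin n → ℝ, StrictMono (fun i => lam i w))
    (hlindeg : ∀ (i : Fin n) (w v : Fin n → ℝ),
      (∀ j, j ≠ i → w j = v j) → lam i w = lam i v)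
    (wbar : Fin n → ℝ) (hwbarK : wbar ∈ K)
    (w0 : ℝ → Fin n → ℝ) (hw0m : Measurable w0) (hw0K : ∀ x, w0 x ∈ K)
    (hw0L1 : Integrable (fun x => w0 x - wbar))
    (Z0 X0 : ℝ → ℝ)
    (hZ0 : ∀ x, Z0 x = ∫ ξ in (0:ℝ)..x, N (w0 ξ))
    (hX0Z0 : ∀ x, X0 (Z0 x) = x) (hZ0X0 : ∀ z, Z0 (X0 z) = z)
    (wt : ℝ → ℝ → Fin n → ℝ)
    (hwt : ∀ t z i, wt t z i = w0 (X0 (z - tlam i * t)) i)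
    (X : ℝ → ℝ → ℝ)
    (hX : ∀ t z, X t z = X0 z + ∫ τ in (0:ℝ)..t,
        (lam ⟨0, by omega⟩ (wt τ z) - tlam ⟨0, by omega⟩ / N (wt τ z)))
    (Z : ℝ → ℝ → ℝ)
    (hXZ : ∀ t, 0 ≤ t → ∀ x, X t (Z t x) = x)
    (hZX : ∀ t, 0 ≤ t → ∀ z, Z t (X t z) = z)
    (i : Fin n) (hi : tlam i = 0) :
    (∀ x : ℝ, IntegrableOn (fun τ => lam i (wt τ (Z0 x)) - lam i wbar) (Ioi (0:ℝ))) ∧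
    (∀ x : ℝ, Tendsto
        (fun t => ∫ τ in (0:ℝ)..t,
          (M (wt τ (Z0 x)) / N (wt τ (Z0 x)) - M wbar / N wbar))
        atTop (nhds (∫ τ in Ioi (0:ℝ), (lam i (wt τ (Z0 x)) - lam i wbar)))) ∧
    (∀ s : Set ℝ, IsCompact s → TendstoUniformlyOn
        (fun t x => ∫ τ in (0:ℝ)..t,
          (M (wt τ (Z0 x)) / N (wt τ (Z0 x)) - M wbar / N wbar))
        (fun x => ∫ τ in Ioi (0:ℝ), (lam i (wt τ (Z0 x)) - lam i wbar))
        atTop s) := by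
  classical
  have hKhull : K ⊆ convexHull ℝ K := subset_convexHull ℝ K
  have hNw0 : ∀ x : ℝ, c ≤ N (w0 x) ∧ N (w0 x) ≤ C := fun x => hNbd _ (hKhull (hw0K x))
  have hC0 : 0 < C := hc.trans_le hcC
  have hNwbar : 0 < N wbar := hc.trans_le (hNbd wbar (hKhull hwbarK)).1
  -- some j different from i
  obtain ⟨j0, hj0⟩ : ∃ j : Fin n, j ≠ i := by
    rcases eq_or_ne (⟨0, by omega⟩ : Fin n) i with h | h
    · refine ⟨⟨1, by omega⟩, ?_⟩
      rw [← h]; simp [Fin.ext_iff]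
    · exact ⟨_, h⟩
  -- tlam j ≠ 0 for j ≠ i
  have htlam_ne : ∀ j : Fin n, j ≠ i → tlam j ≠ 0 := by
    intro j hj h0
    have h1 := hrich wbar i
    have h2 := hrich wbar j
    rw [hi, sub_zero] at h1
    rw [h0, sub_zero] at h2
    have heq : lam i wbar = lam j wbar :=
      mul_left_cancel₀ (ne_of_gt hNwbar) (by linarith)
    exact hj ((hstrict wbar).injective heq.symm)
  -- N never vanishes
  have hNne : ∀ w, N w ≠ 0 := by
    intro w h0
    have h1 := hrich w i
    have h2 := hrich w j0
    rw [h0, zero_mul, zero_sub, hi, neg_zero] at h1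
    rw [h0, zero_mul, zero_sub] at h2
    exact htlam_ne j0 hj0 (by linarith)
  have hMoverN : ∀ w, M w / N w = lam i w := by
    intro w
    have h := hrich w i
    rw [hi, sub_zero] at h
    rw [← h, mul_div_cancel_left₀ _ (hNne w)]
  simp only [hMoverN]
  -- integrability of N ∘ w0 on intervals
  have hNw0m : Measurable fun ξ => N (w0 ξ) := hN.continuous.measurable.comp hw0m
  have hNint : ∀ a b : ℝ, IntervalIntegrable (fun ξ => N (w0 ξ)) volume a b := by
    intro a b
    rw [intervalIntegrable_iff]
    refine Measure.integrableOn_of_bounded measure_Ioc_lt_top.ne hNw0m.aestronglyMeasurable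
      (M := C) (ae_of_all _ fun ξ => ?_)
    rw [Real.norm_eq_abs, abs_le]
    constructor
    · linarith [(hNw0 ξ).1]
    · exact (hNw0 ξ).2
  have hZ0sub : ∀ x y : ℝ, Z0 y - Z0 x = ∫ ξ in x..y, N (w0 ξ) := by
    intro x y
    rw [hZ0 x, hZ0 y]
    exact intervalIntegral.integral_interval_sub_left (hNint 0 y) (hNint 0 x)
  have hZ0lip : LipschitzWith C.toNNReal Z0 := by
    refine LipschitzWith.of_dist_le_mul fun x y => ?_
    rw [Real.dist_eq, Real.dist_eq]
    have := intervalIntegral.norm_integral_le_of_norm_le_const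
      (a := y) (b := x) (C := C) (f := fun ξ => N (w0 ξ)) (fun ξ _ => by
        rw [Real.norm_eq_abs, abs_le]
        exact ⟨by linarith [(hNw0 ξ).1], (hNw0 ξ).2⟩)
    rw [Real.coe_toNNReal _ hC0.le]
    calc |Z0 x - Z0 y| = ‖∫ ξ in y..x, N (w0 ξ)‖ := by rw [hZ0sub y x, Real.norm_eq_abs]
      _ ≤ C * |x - y| := this
  have hZ0exp : ∀ x y : ℝ, x ≤ y → c * (y - x) ≤ Z0 y - Z0 x := by
    intro x y hxy
    rw [hZ0sub x y]
    have hle : ∫ ξ in x..y, c ≤ ∫ ξ in x..y, N (w0 ξ) :=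
      intervalIntegral.integral_mono_on hxy intervalIntegrable_const (hNint x y)
        (fun ξ _ => (hNw0 ξ).1)
    simpa [intervalIntegral.integral_const, smul_eq_mul, mul_comm] using hle
  have hZ0mono : StrictMono Z0 := by
    intro x y hxy
    have := hZ0exp x y hxy.le
    nlinarith
  have hX0mono : StrictMono X0 := by
    intro a b hab
    by_contra h
    push_neg at h
    have : Z0 (X0 b) ≤ Z0 (X0 a) := hZ0mono.monotone h
    rw [hZ0X0, hZ0X0] at this
    exact absurd this (not_le.2 hab)
  have hX0lip : LipschitzWith (c⁻¹).toNNReal X0 := by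
    refine LipschitzWith.of_dist_le_mul fun a b => ?_
    rw [Real.coe_toNNReal _ (by positivity : (0:ℝ) ≤ c⁻¹), Real.dist_eq, Real.dist_eq]
    have key : c * |X0 a - X0 b| ≤ |a - b| := by
      rcases le_total (X0 b) (X0 a) with h | h
      · have h2 := hZ0exp _ _ h
        rw [hZ0X0, hZ0X0] at h2
        rw [abs_of_nonneg (by linarith : (0:ℝ) ≤ X0 a - X0 b)]
        calc c * (X0 a - X0 b) ≤ a - b := h2
          _ ≤ |a - b| := le_abs_self _
      · have h2 := hZ0exp _ _ h
        rw [hZ0X0, hZ0X0] at h2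
        rw [abs_of_nonpos (by linarith : X0 a - X0 b ≤ 0)]
        calc c * -(X0 a - X0 b) = c * (X0 b - X0 a) := by ring
          _ ≤ b - a := h2
          _ ≤ |a - b| := by rw [abs_sub_comm]; exact le_abs_self _
    rw [inv_mul_eq_div, le_div_iff₀ hc, mul_comm]
    exact key
  have hX0cont : Continuous X0 := hX0lip.continuous
  -- coordinate functions
  have hgmeas : ∀ j : Fin n, Measurable fun x => w0 x j - wbar j := fun j =>
    ((measurable_pi_apply j).comp hw0m).sub measurable_const
  have hgint : ∀ j : Fin n, Integrable (fun x => w0 x j - wbar j) := by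
    intro j
    have := (ContinuousLinearMap.proj (R := ℝ) (φ := fun _ : Fin n => ℝ) j).integrable_comp hw0L1
    simpa [Pi.sub_apply] using this
  -- the composition bound
  have hcomp : ∀ (g : ℝ → ℝ≥0∞), Measurable g → ∀ (z : ℝ) (j : Fin n), tlam j ≠ 0 →
      ∫⁻ τ, g (X0 (z - tlam j * τ)) ≤ (Real.toNNReal (C / |tlam j|) : ℝ≥0∞) * ∫⁻ σ, g σ := by
    intro g hg z j ha
    have haabs : 0 < |tlam j| := abs_pos.2 ha
    set ψ : ℝ → ℝ := fun τ => X0 (z - tlam j * τ) with hψdef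
    set φ : ℝ → ℝ := fun σ => (z - Z0 σ) / tlam j with hφdef
    have hψm : Measurable ψ :=
      hX0cont.measurable.comp (measurable_const.sub (measurable_const.mul measurable_id))
    have hφlip : LipschitzWith (Real.toNNReal (C / |tlam j|)) φ := by
      refine LipschitzWith.of_dist_le_mul fun u v => ?_
      rw [Real.coe_toNNReal _ (by positivity), Real.dist_eq, Real.dist_eq]
      have : φ u - φ v = (Z0 v - Z0 u) / tlam j := by
        rw [hφdef]; ring
      rw [this, abs_div]
      have hZ : |Z0 v - Z0 u| ≤ C * |u - v| := by
        have := hZ0lip.dist_le_mul v u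
        rw [Real.dist_eq, Real.dist_eq, Real.coe_toNNReal _ hC0.le] at this
        calc |Z0 v - Z0 u| ≤ C * |v - u| := this
          _ = C * |u - v| := by rw [abs_sub_comm]
      rw [div_le_iff₀ haabs] at *
      calc |Z0 v - Z0 u| ≤ C * |u - v| := hZ
        _ = C / |tlam j| * |u - v| * |tlam j| := by field_simp
    have h1 : ∀ σ, ψ (φ σ) = σ := by
      intro σ
      rw [hψdef, hφdef]
      simp only
      rw [mul_div_cancel₀ _ ha, sub_sub_cancel, hX0Z0]
    have h2 : ∀ τ, φ (ψ τ) = τ := by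
      intro τ
      rw [hψdef, hφdef]
      simp only
      rw [hZ0X0, sub_sub_cancel, mul_div_cancel_left₀ _ ha]
    exact aux_comp_lintegral_le hψm hφlip h1 h2 hg
  -- integrability of each moving coordinate
  have hIj : ∀ (j : Fin n), tlam j ≠ 0 → ∀ z : ℝ,
      Integrable (fun τ => w0 (X0 (z - tlam j * τ)) j - wbar j) := by
    intro j hj z
    have hm : Measurable fun τ => w0 (X0 (z - tlam j * τ)) j - wbar j :=
      (hgmeas j).comp (hX0cont.measurable.comp
        (measurable_const.sub (measurable_const.mul measurable_id)))
    refine ⟨hm.aestronglyMeasurable, ?_⟩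
    rw [hasFiniteIntegral_def]
    have hgm : Measurable fun σ => (‖w0 σ j - wbar j‖₊ : ℝ≥0∞) := (hgmeas j).nnnorm.coe_nnreal_ennreal
    calc ∫⁻ τ, (‖w0 (X0 (z - tlam j * τ)) j - wbar j‖₊ : ℝ≥0∞)
        ≤ (Real.toNNReal (C / |tlam j|) : ℝ≥0∞) * ∫⁻ σ, (‖w0 σ j - wbar j‖₊ : ℝ≥0∞) :=
          hcomp _ hgm z j hj
      _ < ∞ := ENNReal.mul_lt_top ENNReal.coe_lt_top ((hgint j).2)
  -- bounds on K
  obtain ⟨R0, hR0⟩ := hK.isBounded.exists_norm_le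
  set R : ℝ := max R0 0 with hRdef
  have hRK : ∀ v ∈ K, ‖v‖ ≤ R := fun v hv => (hR0 v hv).trans (le_max_left _ _)
  have hR : 0 ≤ R := le_max_right _ _
  have hwbarball : wbar ∈ Metric.closedBall (0 : Fin n → ℝ) R := by
    rw [Metric.mem_closedBall, dist_zero_right]
    exact hRK wbar hwbarK
  have hwt' : ∀ t z, wt t z = fun j => w0 (X0 (z - tlam j * t)) j := fun t z => funext (hwt t z)
  have hwtball : ∀ τ z, wt τ z ∈ Metric.closedBall (0 : Fin n → ℝ) R := by
    intro τ z
    rw [Metric.mem_closedBall, dist_zero_right]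
    refine (pi_norm_le_iff_of_nonneg hR).2 fun j => ?_
    rw [hwt τ z j]
    exact (norm_le_pi_norm _ j).trans (hRK _ (hw0K _))
  -- Lipschitz constant for lam i on the ball
  obtain ⟨L0, hL0⟩ := (isCompact_closedBall (0 : Fin n → ℝ) R).exists_bound_of_continuousOn
    ((hlam i).continuous_fderiv one_ne_zero).continuousOn
  set Lr : ℝ≥0 := Real.toNNReal L0 with hLrdef
  have hLip : LipschitzOnWith Lr (lam i) (Metric.closedBall (0 : Fin n → ℝ) R) := by
    refine Convex.lipschitzOnWith_of_nnnorm_fderiv_le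
      (fun x _ => (hlam i).differentiable one_ne_zero x) (fun x hx => ?_) (convex_closedBall _ _)
    have h := hL0 x hx
    rw [← NNReal.coe_le_coe, coe_nnnorm, Real.coe_toNNReal _ ((norm_nonneg _).trans h)]
    exact h
  -- pointwise domination
  have hdom : ∀ τ z : ℝ, |lam i (wt τ z) - lam i wbar| ≤
      (Lr : ℝ) * ∑ j ∈ Finset.univ.erase i, |w0 (X0 (z - tlam j * τ)) j - wbar j| := by
    intro τ z
    set u : Fin n → ℝ := Function.update (wt τ z) i (wbar i) with hudef
    have h1 : lam i (wt τ z) = lam i u :=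
      hlindeg i _ _ (fun j hj => (Function.update_of_ne hj _ _).symm)
    have huball : u ∈ Metric.closedBall (0 : Fin n → ℝ) R := by
      rw [Metric.mem_closedBall, dist_zero_right]
      refine (pi_norm_le_iff_of_nonneg hR).2 fun j => ?_
      rcases eq_or_ne j i with rfl | hj
      · rw [hudef, Function.update_self]
        exact (norm_le_pi_norm _ j).trans (hRK _ hwbarK)
      · rw [hudef, Function.update_of_ne hj]
        rw [hwt τ z j]
        exact (norm_le_pi_norm _ j).trans (hRK _ (hw0K _))
    have hsum_nonneg : (0:ℝ) ≤ ∑ j ∈ Finset.univ.erase i, |w0 (X0 (z - tlam j * τ)) j - wbar j| :=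
      Finset.sum_nonneg fun j _ => abs_nonneg _
    have h3 : dist (lam i u) (lam i wbar) ≤ (Lr : ℝ) * dist u wbar :=
      hLip.dist_le_mul u huball wbar hwbarball
    have h4 : dist u wbar ≤ ∑ j ∈ Finset.univ.erase i, |w0 (X0 (z - tlam j * τ)) j - wbar j| := by
      rw [dist_eq_norm]
      refine (pi_norm_le_iff_of_nonneg hsum_nonneg).2 fun k => ?_
      rcases eq_or_ne k i with rfl | hk
      · simp only [Pi.sub_apply, hudef, Function.update_self, sub_self, norm_zero]
        exact hsum_nonneg
      · simp only [Pi.sub_apply, hudef, Function.update_of_ne hk]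
        rw [hwt τ z k, Real.norm_eq_abs]
        exact Finset.single_le_sum (f := fun j => |w0 (X0 (z - tlam j * τ)) j - wbar j|)
          (fun j _ => abs_nonneg _) (Finset.mem_erase.2 ⟨hk, Finset.mem_univ k⟩)
    calc |lam i (wt τ z) - lam i wbar| = dist (lam i u) (lam i wbar) := by
          rw [h1, Real.dist_eq]
      _ ≤ (Lr : ℝ) * dist u wbar := h3
      _ ≤ _ := by
          have := mul_le_mul_of_nonneg_left h4 (Lr.coe_nonneg)
          exact this
  -- measurability of the main integrand
  have hfmeas : ∀ z : ℝ, Measurable (fun τ => lam i (wt τ z) - lam i wbar) := by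
    intro z
    simp only [hwt']
    refine Measurable.sub ?_ measurable_const
    exact (hlam i).continuous.measurable.comp
      (measurable_pi_lambda _ fun j => ((measurable_pi_apply j).comp hw0m).comp
        (hX0cont.measurable.comp (measurable_const.sub (measurable_const.mul measurable_id))))
  -- integrability (on all of ℝ)
  have hintfull : ∀ z : ℝ, Integrable (fun τ => lam i (wt τ z) - lam i wbar) := by
    intro z
    have hD : Integrable (fun τ => (Lr : ℝ) *
        ∑ j ∈ Finset.univ.erase i, |w0 (X0 (z - tlam j * τ)) j - wbar j|) := by
      refine Integrable.const_mul ?_ _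
      refine integrable_finset_sum _ fun j hj => ?_
      exact (hIj j (htlam_ne j (Finset.mem_erase.1 hj).1) z).abs
    refine hD.mono' (hfmeas z).aestronglyMeasurable (ae_of_all _ fun τ => ?_)
    rw [Real.norm_eq_abs]
    exact hdom τ z
  have hint : ∀ z : ℝ, IntegrableOn (fun τ => lam i (wt τ z) - lam i wbar) (Ioi (0:ℝ)) :=
    fun z => (hintfull z).integrableOn
  refine ⟨fun x => hint (Z0 x), fun x => ?_, ?_⟩
  · exact intervalIntegral_tendsto_integral_Ioi 0 (hint (Z0 x)) tendsto_id
  · -- uniform convergence on compacts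
    intro s hs
    rw [Metric.tendstoUniformlyOn_iff]
    intro ε hε
    obtain ⟨B, hB⟩ := hs.exists_bound_of_continuousOn hZ0lip.continuous.continuousOn
    -- tail sets
    set Gset : Fin n → ℝ → Set ℝ := fun j t =>
      if 0 < tlam j then Iio (X0 (B - tlam j * t)) else Ioi (X0 (-B - tlam j * t)) with hGsetdef
    -- tail quantity
    set T : ℝ → ℝ≥0∞ := fun t => (Lr : ℝ≥0∞) *
      ∑ j ∈ Finset.univ.erase i, (Real.toNNReal (C / |tlam j|) : ℝ≥0∞) *
        ∫⁻ σ in Gset j t, (‖w0 σ j - wbar j‖₊ : ℝ≥0∞) with hTdef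
    have hGmeas : ∀ (j : Fin n) (t : ℝ), MeasurableSet (Gset j t) := by
      intro j t
      rw [hGsetdef]
      simp only
      split
      · exact measurableSet_Iio
      · exact measurableSet_Ioi
    have hindm : ∀ (j : Fin n) (t : ℝ), Measurable ((Gset j t).indicator
        (fun σ => (‖w0 σ j - wbar j‖₊ : ℝ≥0∞))) := fun j t =>
      ((hgmeas j).nnnorm.coe_nnreal_ennreal).indicator (hGmeas j t)
    -- tail bound
    have htail : ∀ t : ℝ, ∀ x ∈ s,
        ∫⁻ τ in Ioi t, (‖lam i (wt τ (Z0 x)) - lam i wbar‖₊ : ℝ≥0∞) ≤ T t := by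
      intro t x hx
      have hzB : |Z0 x| ≤ B := by
        have := hB x hx
        rwa [Real.norm_eq_abs] at this
      -- pointwise inclusion
      have hincl : ∀ j : Fin n, j ≠ i → ∀ τ ∈ Ioi t, X0 (Z0 x - tlam j * τ) ∈ Gset j t := by
        intro j hj τ hτ
        have haj := htlam_ne j hj
        rcases haj.lt_or_gt with hneg | hpos
        · simp only [hGsetdef, if_neg (not_lt.2 hneg.le), mem_Ioi]
          refine hX0mono ?_
          have : tlam j * τ < tlam j * t := by nlinarith [mem_Ioi.1 hτ]
          have h1 : -B ≤ Z0 x := neg_le_of_abs_le hzB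
          linarith
        · simp only [hGsetdef, if_pos hpos, mem_Iio]
          refine hX0mono ?_
          have : tlam j * t < tlam j * τ := by nlinarith [mem_Ioi.1 hτ]
          have h1 : Z0 x ≤ B := le_of_abs_le hzB
          linarith
      have hcompm : ∀ j : Fin n, Measurable (fun τ => (Gset j t).indicator
          (fun σ => (‖w0 σ j - wbar j‖₊ : ℝ≥0∞)) (X0 (Z0 x - tlam j * τ))) := fun j =>
        (hindm j t).comp (hX0cont.measurable.comp
          (measurable_const.sub (measurable_const.mul measurable_id)))
      -- estimate
      calc ∫⁻ τ in Ioi t, (‖lam i (wt τ (Z0 x)) - lam i wbar‖₊ : ℝ≥0∞)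
          ≤ ∫⁻ τ in Ioi t, ((Lr : ℝ≥0∞) * ∑ j ∈ Finset.univ.erase i,
              (Gset j t).indicator (fun σ => (‖w0 σ j - wbar j‖₊ : ℝ≥0∞))
                (X0 (Z0 x - tlam j * τ))) := by
            refine setLIntegral_mono' measurableSet_Ioi fun τ hτ => ?_
            have hd := hdom τ (Z0 x)
            calc (‖lam i (wt τ (Z0 x)) - lam i wbar‖₊ : ℝ≥0∞)
                = ENNReal.ofReal |lam i (wt τ (Z0 x)) - lam i wbar| := by
                  exact Real.enorm_eq_ofReal_abs _
              _ ≤ ENNReal.ofReal ((Lr : ℝ) * ∑ j ∈ Finset.univ.erase i,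
                  |w0 (X0 (Z0 x - tlam j * τ)) j - wbar j|) := ENNReal.ofReal_le_ofReal hd
              _ = (Lr : ℝ≥0∞) * ∑ j ∈ Finset.univ.erase i,
                  ENNReal.ofReal |w0 (X0 (Z0 x - tlam j * τ)) j - wbar j| := by
                  rw [ENNReal.ofReal_mul Lr.coe_nonneg, ENNReal.ofReal_coe_nnreal,
                    ENNReal.ofReal_sum_of_nonneg (fun j _ => abs_nonneg _)]
              _ ≤ (Lr : ℝ≥0∞) * ∑ j ∈ Finset.univ.erase i,
                  (Gset j t).indicator (fun σ => (‖w0 σ j - wbar j‖₊ : ℝ≥0∞))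
                    (X0 (Z0 x - tlam j * τ)) := by
                  refine mul_le_mul_right (Finset.sum_le_sum fun j hj => ?_) _
                  have hmem := hincl j (Finset.mem_erase.1 hj).1 τ hτ
                  rw [indicator_of_mem hmem]; exact (Real.enorm_eq_ofReal_abs _).ge
        _ ≤ ∫⁻ τ, ((Lr : ℝ≥0∞) * ∑ j ∈ Finset.univ.erase i,
              (Gset j t).indicator (fun σ => (‖w0 σ j - wbar j‖₊ : ℝ≥0∞))
                (X0 (Z0 x - tlam j * τ))) := setLIntegral_le_lintegral _ _
        _ = (Lr : ℝ≥0∞) * ∑ j ∈ Finset.univ.erase i, ∫⁻ τ,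
              (Gset j t).indicator (fun σ => (‖w0 σ j - wbar j‖₊ : ℝ≥0∞))
                (X0 (Z0 x - tlam j * τ)) := by
            rw [lintegral_const_mul' _ _ ENNReal.coe_ne_top]
            congr 1
            exact lintegral_finset_sum _ fun j hj => hcompm j
        _ ≤ T t := by
            rw [hTdef]
            refine mul_le_mul_right (Finset.sum_le_sum fun j hj => ?_) _
            calc ∫⁻ τ, (Gset j t).indicator (fun σ => (‖w0 σ j - wbar j‖₊ : ℝ≥0∞))
                  (X0 (Z0 x - tlam j * τ))
                ≤ (Real.toNNReal (C / |tlam j|) : ℝ≥0∞) * ∫⁻ σ,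
                    (Gset j t).indicator (fun σ => (‖w0 σ j - wbar j‖₊ : ℝ≥0∞)) σ :=
                  hcomp _ (hindm j t) (Z0 x) j (htlam_ne j (Finset.mem_erase.1 hj).1)
              _ = (Real.toNNReal (C / |tlam j|) : ℝ≥0∞) *
                    ∫⁻ σ in Gset j t, (‖w0 σ j - wbar j‖₊ : ℝ≥0∞) := by
                  rw [lintegral_indicator (hGmeas j t)]
    -- T tends to 0
    have hTtend : Tendsto T atTop (nhds 0) := by
      rw [hTdef]
      have hsum : Tendsto (fun t => ∑ j ∈ Finset.univ.erase i,
          (Real.toNNReal (C / |tlam j|) : ℝ≥0∞) *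
            ∫⁻ σ in Gset j t, (‖w0 σ j - wbar j‖₊ : ℝ≥0∞)) atTop (nhds 0) := by
        have : (0 : ℝ≥0∞) = ∑ j ∈ Finset.univ.erase i, 0 := by simp
        rw [this]
        refine tendsto_finset_sum _ fun j hj => ?_
        have haj := htlam_ne j (Finset.mem_erase.1 hj).1
        set ν : Measure ℝ := volume.withDensity (fun σ => (‖w0 σ j - wbar j‖₊ : ℝ≥0∞)) with hνdef
        have hνS : ∀ S : Set ℝ, MeasurableSet S →
            ν S = ∫⁻ σ in S, (‖w0 σ j - wbar j‖₊ : ℝ≥0∞) := fun S hS =>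
          withDensity_apply _ hS
        have hνfin : ν univ ≠ ∞ := by
          rw [hνS univ MeasurableSet.univ, Measure.restrict_univ]
          exact (hgint j).2.ne
        have hG0 : Tendsto (fun t => ν (Gset j t)) atTop (nhds 0) := by
          rcases haj.lt_or_gt with hneg | hpos
          · have hGeq : ∀ t, Gset j t = Ioi (X0 (-B - tlam j * t)) := fun t => by
              rw [hGsetdef]; simp only [if_neg (not_lt.2 hneg.le)]
            simp only [hGeq]
            refine (aux_tendsto_measure_Ioi_atTop ν hνfin).comp ?_
            refine (Monotone.tendsto_atTop_atTop (f := X0) hX0mono.monotone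
              (fun b => ⟨Z0 b, (hX0Z0 b).ge⟩)).comp ?_
            have h1 : Tendsto (fun t : ℝ => (-tlam j) * t) atTop atTop :=
              (tendsto_const_mul_atTop_of_pos (by linarith : (0:ℝ) < -tlam j)).2 tendsto_id
            have heq : (fun t : ℝ => -B - tlam j * t) = fun t => -B + (-tlam j) * t := by
              funext t; ring
            rw [heq]
            exact tendsto_atTop_add_const_left _ _ h1
          · have hGeq : ∀ t, Gset j t = Iio (X0 (B - tlam j * t)) := fun t => by
              rw [hGsetdef]; simp only [if_pos hpos]
            simp only [hGeq]
            refine (aux_tendsto_measure_Iio_atBot ν hνfin).comp ?_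
            refine (Monotone.tendsto_atBot_atBot (f := X0) hX0mono.monotone
              (fun b => ⟨Z0 b, (hX0Z0 b).le⟩)).comp ?_
            have h1 : Tendsto (fun t : ℝ => (-tlam j) * t) atTop atBot :=
              (tendsto_const_mul_atBot_of_neg (by linarith : -tlam j < (0:ℝ))).2 tendsto_id
            have heq : (fun t : ℝ => B - tlam j * t) = fun t => B + (-tlam j) * t := by
              funext t; ring
            rw [heq]
            exact tendsto_atBot_add_const_left _ _ h1
        have : Tendsto (fun t => (Real.toNNReal (C / |tlam j|) : ℝ≥0∞) * ν (Gset j t))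
            atTop (nhds ((Real.toNNReal (C / |tlam j|) : ℝ≥0∞) * 0)) :=
          ENNReal.Tendsto.const_mul hG0 (Or.inr ENNReal.coe_ne_top)
        rw [mul_zero] at this
        refine this.congr fun t => ?_
        rw [hνS _ (hGmeas j t)]
      have h2 : Tendsto (fun t => (Lr : ℝ≥0∞) * ∑ j ∈ Finset.univ.erase i,
          (Real.toNNReal (C / |tlam j|) : ℝ≥0∞) *
            ∫⁻ σ in Gset j t, (‖w0 σ j - wbar j‖₊ : ℝ≥0∞)) atTop (nhds ((Lr : ℝ≥0∞) * 0)) :=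
        ENNReal.Tendsto.const_mul hsum (Or.inr ENNReal.coe_ne_top)
      rw [mul_zero] at h2
      exact h2
    -- conclusion
    have hev1 : ∀ᶠ t : ℝ in atTop, T t < ENNReal.ofReal ε :=
      hTtend.eventually_lt_const (by simp [hε])
    filter_upwards [hev1, eventually_ge_atTop (0:ℝ)] with t hT ht0 x hx
    have hfx := hint (Z0 x)
    -- split the integral
    have hsplit : ∫ τ in Ioi (0:ℝ), (lam i (wt τ (Z0 x)) - lam i wbar) =
        (∫ τ in Ioc (0:ℝ) t, (lam i (wt τ (Z0 x)) - lam i wbar)) +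
        ∫ τ in Ioi t, (lam i (wt τ (Z0 x)) - lam i wbar) := by
      rw [← setIntegral_union (Ioc_disjoint_Ioi le_rfl) measurableSet_Ioi
        ((hintfull (Z0 x)).integrableOn) ((hintfull (Z0 x)).integrableOn),
        Ioc_union_Ioi_eq_Ioi ht0]
    have hFt : ∫ τ in (0:ℝ)..t, (lam i (wt τ (Z0 x)) - lam i wbar) =
        ∫ τ in Ioc (0:ℝ) t, (lam i (wt τ (Z0 x)) - lam i wbar) :=
      intervalIntegral.integral_of_le ht0
    rw [Real.dist_eq, hFt, hsplit]
    have habs : |∫ τ in Ioi t, (lam i (wt τ (Z0 x)) - lam i wbar)| ≤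
        (∫⁻ τ in Ioi t, (‖lam i (wt τ (Z0 x)) - lam i wbar‖₊ : ℝ≥0∞)).toReal := by
      rw [← Real.norm_eq_abs]
      refine (norm_integral_le_lintegral_norm _).trans (le_of_eq ?_)
      congr 1
      refine lintegral_congr fun τ => ?_
      rw [Real.norm_eq_abs]; exact (Real.enorm_eq_ofReal_abs _).symm
    have hlt : (∫⁻ τ in Ioi t, (‖lam i (wt τ (Z0 x)) - lam i wbar‖₊ : ℝ≥0∞)).toReal < ε := by
      have hle := htail t x hx
      have := hle.trans_lt hT
      calc (∫⁻ τ in Ioi t, (‖lam i (wt τ (Z0 x)) - lam i wbar‖₊ : ℝ≥0∞)).toReal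
          < (ENNReal.ofReal ε).toReal := by
            refine ENNReal.toReal_strict_mono (by simp) this
        _ = ε := ENNReal.toReal_ofReal hε.le
    calc |(∫ τ in Ioc (0:ℝ) t, (lam i (wt τ (Z0 x)) - lam i wbar)) +
          (∫ τ in Ioi t, (lam i (wt τ (Z0 x)) - lam i wbar)) -
          (∫ τ in Ioc (0:ℝ) t, (lam i (wt τ (Z0 x)) - lam i wbar))|
        = |∫ τ in Ioi t, (lam i (wt τ (Z0 x)) - lam i wbar)| := by rw [add_sub_cancel_left]
      _ ≤ _ := habs
      _ < ε := hlt
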